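/- arXiv:2411.07661 — 2 statements merged into one kernel-verified Lean document; each statement's English description precedes it below -/
import Mathlib

section
/- Suppose y^n ∈ X satisfies the optimality condition ∇H^n(y^n) − ∇F^n(u^n) + M(y^n − u^n) = 0, d^n = y^n − u^n ≠ 0, E^n is differentiable with continuous gradient, and δt < 2/(3L). Then for every α ∈ (0, 2/(3δt) − L) there exists λ̄ > 0 such that for all λ ∈ (0, λ̄], E^n(y^n + λ d^n) − E^n(y^n) ≤ −α λ ‖d^n‖²; in particular the Armijo-type line search at y^n along d^n is feasible. -/
open scoped RealInnerProductSpace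

section Helpers

variable {X : Type*} [NormedAddCommGroup X] [InnerProductSpace ℝ X] [CompleteSpace X]

lemma hasGradientAt_of_fderiv {φ : X → ℝ} {Φ : X →L[ℝ] ℝ} {g x : X}
    (hΦ : HasFDerivAt φ Φ x) (hg : ∀ v, Φ v = ⟪g, v⟫) : HasGradientAt φ g x := by
  rw [hasGradientAt_iff_hasFDerivAt]
  have : (InnerProductSpace.toDual ℝ X g : X →L[ℝ] ℝ) = Φ :=
    ContinuousLinearMap.ext fun v => by
      rw [InnerProductSpace.toDual_apply_apply, hg]
  rw [this]; exact hΦ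

lemma hasGradientAt_toFDeriv {φ : X → ℝ} {g x : X} (h : HasGradientAt φ g x) :
    HasFDerivAt φ (InnerProductSpace.toDual ℝ X g : X →L[ℝ] ℝ) x :=
  (hasGradientAt_iff_hasFDerivAt).mp h

lemma HasGradientAt.add'' {φ ψ : X → ℝ} {g₁ g₂ x} (h1 : HasGradientAt φ g₁ x)
    (h2 : HasGradientAt ψ g₂ x) : HasGradientAt (fun u => φ u + ψ u) (g₁ + g₂) x :=
  hasGradientAt_of_fderiv ((hasGradientAt_toFDeriv h1).add (hasGradientAt_toFDeriv h2))
    (fun v => by simp [InnerProductSpace.toDual_apply_apply, inner_add_left])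

lemma HasGradientAt.sub'' {φ ψ : X → ℝ} {g₁ g₂ x} (h1 : HasGradientAt φ g₁ x)
    (h2 : HasGradientAt ψ g₂ x) : HasGradientAt (fun u => φ u - ψ u) (g₁ - g₂) x :=
  hasGradientAt_of_fderiv ((hasGradientAt_toFDeriv h1).sub (hasGradientAt_toFDeriv h2))
    (fun v => by simp [InnerProductSpace.toDual_apply_apply, inner_sub_left])

lemma HasGradientAt.const_mul'' {φ : X → ℝ} {g x} (c : ℝ) (h1 : HasGradientAt φ g x) :
    HasGradientAt (fun u => c * φ u) (c • g) x :=
  hasGradientAt_of_fderiv ((hasGradientAt_toFDeriv h1).const_mul c)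
    (fun v => by simp [InnerProductSpace.toDual_apply_apply, real_inner_smul_left, mul_comm])

lemma hasGradientAt_normsq (a x : X) :
    HasGradientAt (fun u : X => ‖u - a‖ ^ 2) ((2 : ℝ) • (x - a)) x := by
  have hfun : (fun u : X => ‖u - a‖ ^ 2) = fun u : X => ⟪u - a, u - a⟫ :=
    funext fun u => (real_inner_self_eq_norm_sq _).symm
  rw [hfun]
  have h1 : HasFDerivAt (fun u : X => u - a) (ContinuousLinearMap.id ℝ X) x :=
    (hasFDerivAt_id x).sub_const a
  refine hasGradientAt_of_fderiv (h1.inner ℝ h1) fun v => ?_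
  simp only [ContinuousLinearMap.comp_apply, ContinuousLinearMap.prod_apply,
    ContinuousLinearMap.id_apply, fderivInnerCLM_apply, real_inner_smul_left]
  rw [real_inner_comm v (x - a)]; ring

lemma hasGradientAt_inner_const (c a x : X) :
    HasGradientAt (fun u : X => ⟪c, u - a⟫) c x := by
  have h1 : HasFDerivAt (fun u : X => u - a) (ContinuousLinearMap.id ℝ X) x :=
    (hasFDerivAt_id x).sub_const a
  refine hasGradientAt_of_fderiv ((hasFDerivAt_const c x).inner ℝ h1) fun v => ?_
  simp [fderivInnerCLM_apply]

end Helpers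

/-- Feasibility of the Armijo-type line search: if `yⁿ` satisfies the
optimality condition, `dⁿ = yⁿ - uⁿ ≠ 0`, `Eⁿ` is differentiable with continuous gradient,
and `δt < 2/(3L)`, then for every `α ∈ (0, 2/(3δt) - L)` there is `λ̄ > 0` such that
`Eⁿ(yⁿ + λ dⁿ) - Eⁿ(yⁿ) ≤ -α λ ‖dⁿ‖²` for all `λ ∈ (0, λ̄]`. -/
theorem line_search_feasible_un
    {X : Type*} [NormedAddCommGroup X] [InnerProductSpace ℝ X] [FiniteDimensional ℝ X]
    (H : X → ℝ) (h : X → X) (hH : ∀ x : X, HasGradientAt H (h x) x)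
    (hHconv : ConvexOn ℝ Set.univ H)
    (F : X → ℝ) (f : X → X) (hF : ∀ x : X, HasGradientAt F (f x) x)
    (L : ℝ) (hL : 0 < L) (hLip : ∀ x y : X, ‖f x - f y‖ ≤ L * ‖x - y‖)
    (δt : ℝ) (hδt : 0 < δt) (hδt2 : δt < 2 / (3 * L))
    (M : X →L[ℝ] X) (hMsym : ∀ x y : X, ⟪M x, y⟫ = ⟪x, M y⟫)
    (hMpsd : ∀ x : X, 0 ≤ ⟪M x, x⟫)
    (un unm1 : X)
    (Hn Fn En : X → ℝ)
    (hHn : ∀ u : X, Hn u = H u + (1 / δt) * ‖u - un‖ ^ 2)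
    (hFn : ∀ u : X, Fn u = (1 / (3 * δt)) * ‖u - unm1‖ ^ 2 - F u
      - ⟪f un - f unm1, u - unm1⟫)
    (hEn : ∀ u : X, En u = Hn u - Fn u)
    (hEdiff : Differentiable ℝ En) (hEcont : Continuous (gradient En))
    (yn : X)
    (hopt : gradient Hn yn - gradient Fn un + M (yn - un) = 0)
    (hd : yn - un ≠ 0) :
    ∀ α : ℝ, 0 < α → α < 2 / (3 * δt) - L →
      ∃ lamBar : ℝ, 0 < lamBar ∧ ∀ lam : ℝ, 0 < lam → lam ≤ lamBar →
        En (yn + lam • (yn - un)) - En yn ≤ -(α * lam * ‖yn - un‖ ^ 2) := by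
  intro α hα hα2
  set d := yn - un with hdd
  -- gradients of Hn, Fn, En
  have hHnfun : Hn = fun u => H u + (1 / δt) * ‖u - un‖ ^ 2 := funext hHn
  have hFnfun : Fn = fun u => (1 / (3 * δt)) * ‖u - unm1‖ ^ 2 - F u
      - ⟪f un - f unm1, u - unm1⟫ := funext hFn
  have hEnfun : En = fun u => Hn u - Fn u := funext hEn
  have gradHn : ∀ x : X, HasGradientAt Hn (h x + (1 / δt) • ((2:ℝ) • (x - un))) x := by
    intro x; rw [hHnfun]
    exact (hH x).add'' ((hasGradientAt_normsq un x).const_mul'' (1/δt))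
  have gradFn : ∀ x : X, HasGradientAt Fn
      ((1 / (3 * δt)) • ((2:ℝ) • (x - unm1)) - f x - (f un - f unm1)) x := by
    intro x; rw [hFnfun]
    exact (((hasGradientAt_normsq unm1 x).const_mul'' (1/(3*δt))).sub'' (hF x)).sub''
      (hasGradientAt_inner_const (f un - f unm1) unm1 x)
  have gradEn : HasGradientAt En
      ((h yn + (1 / δt) • ((2:ℝ) • (yn - un)))
        - ((1 / (3 * δt)) • ((2:ℝ) • (yn - unm1)) - f yn - (f un - f unm1))) yn := by
    rw [hEnfun]; exact (gradHn yn).sub'' (gradFn yn)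
  set g : X := gradient En yn with hg
  have hgval : g = (h yn + (1 / δt) • ((2:ℝ) • (yn - un)))
        - ((1 / (3 * δt)) • ((2:ℝ) • (yn - unm1)) - f yn - (f un - f unm1)) :=
    gradEn.gradient
  -- rewrite using optimality condition
  have hHval : gradient Hn yn = h yn + (1 / δt) • ((2:ℝ) • (yn - un)) := (gradHn yn).gradient
  have hFvalun : gradient Fn un
      = (1 / (3 * δt)) • ((2:ℝ) • (un - unm1)) - f un - (f un - f unm1) :=
    (gradFn un).gradient
  have hopt' : h yn + (1 / δt) • ((2:ℝ) • (yn - un))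
      = ((1 / (3 * δt)) • ((2:ℝ) • (un - unm1)) - f un - (f un - f unm1)) - M d := by
    rw [← hHval, ← hFvalun]
    have := hopt
    rw [sub_add_eq_add_sub, sub_eq_zero] at this
    -- this : gradient Hn yn + M (yn - un) = gradient Fn un
    rw [eq_sub_iff_add_eq]; exact this
  have hgval2 : g = ((1 / (3 * δt)) • ((2:ℝ) • (un - unm1)) - f un - (f un - f unm1)) - M d
        - ((1 / (3 * δt)) • ((2:ℝ) • (yn - unm1)) - f yn - (f un - f unm1)) := by
    rw [hgval, hopt']
  have hgval3 : g = (2 / (3 * δt)) • (un - yn) + (f yn - f un) - M d := by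
    rw [hgval2]
    have h2 : (1 / (3 * δt)) • ((2:ℝ) • (un - unm1)) - (1 / (3 * δt)) • ((2:ℝ) • (yn - unm1))
        = (2 / (3 * δt)) • (un - yn) := by
      rw [← smul_sub, ← smul_sub, smul_smul]
      congr 1
      · ring
      · abel
    rw [← h2]; abel
  -- key inequality on the directional derivative
  have hdn : (0:ℝ) < ‖d‖ := norm_pos_iff.mpr hd
  have hdpos : (0:ℝ) < ‖d‖ ^ 2 := by positivity
  have hkey : ⟪g, d⟫ ≤ (L - 2 / (3 * δt)) * ‖d‖ ^ 2 := by
    rw [hgval3]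
    have hun : un - yn = -d := by rw [hdd]; abel
    rw [inner_sub_left, inner_add_left, hun, real_inner_smul_left, inner_neg_left,
      real_inner_self_eq_norm_sq]
    have h1 : ⟪f yn - f un, d⟫ ≤ L * ‖d‖ ^ 2 := by
      calc ⟪f yn - f un, d⟫ ≤ ‖f yn - f un‖ * ‖d‖ := real_inner_le_norm _ _
        _ ≤ (L * ‖yn - un‖) * ‖d‖ := by
            apply mul_le_mul_of_nonneg_right (hLip yn un) (norm_nonneg d)
        _ = L * ‖d‖ ^ 2 := by rw [← hdd]; ring
    have h2 : 0 ≤ ⟪M d, d⟫ := hMpsd d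
    nlinarith
  have hslope : ⟪g, d⟫ < -(α * ‖d‖ ^ 2) := by
    have : L - 2 / (3 * δt) < -α := by linarith
    nlinarith
  -- derivative of ψ λ = En (yn + λ • d) at 0
  have hline : HasDerivAt (fun t : ℝ => yn + t • d) d 0 := by
    simpa using ((hasDerivAt_id (0:ℝ)).smul_const d).const_add yn
  have hEnF : HasFDerivAt En (InnerProductSpace.toDual ℝ X g : X →L[ℝ] ℝ) yn := by
    rw [hg]; exact hasGradientAt_toFDeriv (hEdiff yn).hasGradientAt
  have hψ : HasDerivAt (fun t : ℝ => En (yn + t • d)) ⟪g, d⟫ 0 := by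
    have hEnF' : HasFDerivAt En (InnerProductSpace.toDual ℝ X g : X →L[ℝ] ℝ)
        ((fun t : ℝ => yn + t • d) 0) := by simpa using hEnF
    have := hEnF'.comp_hasDerivAt (0:ℝ) hline
    exact this
  -- slope argument
  have htend := hasDerivAt_iff_tendsto_slope.mp hψ
  have hev : ∀ᶠ t in nhdsWithin (0:ℝ) {(0:ℝ)}ᶜ,
      slope (fun t : ℝ => En (yn + t • d)) 0 t < -(α * ‖d‖ ^ 2) :=
    htend.eventually_lt_const hslope
  have hev2 : ∀ᶠ t in nhdsWithin (0:ℝ) (Set.Ioi 0),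
      slope (fun t : ℝ => En (yn + t • d)) 0 t < -(α * ‖d‖ ^ 2) :=
    hev.filter_mono (nhdsWithin_mono 0 (fun t ht => ne_of_gt ht))
  rw [Filter.eventually_iff, mem_nhdsGT_iff_exists_Ioc_subset] at hev2
  obtain ⟨ε, hε, hsub⟩ := hev2
  refine ⟨ε, hε, fun lam hlam hlam2 => ?_⟩
  have hmem := hsub ⟨hlam, hlam2⟩
  have : slope (fun t : ℝ => En (yn + t • d)) 0 lam < -(α * ‖d‖ ^ 2) := hmem
  rw [slope_def_field] at this
  have heq : (En (yn + lam • d) - En (yn + (0:ℝ) • d)) / (lam - 0) < -(α * ‖d‖ ^ 2) := this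
  have h0' : En (yn + (0:ℝ) • d) = En yn := by norm_num
  rw [h0', sub_zero, div_lt_iff₀ hlam] at heq
  calc En (yn + lam • d) - En yn ≤ -(α * ‖d‖ ^ 2) * lam := le_of_lt heq
    _ = -(α * lam * ‖d‖ ^ 2) := by ring
end

section
/- Let ũ^n = (4/3)u^n − (1/3)u^{n−1} and suppose y^n ∈ X satisfies (2/(3δt))(3y^n − 4u^n + u^{n−1}) + M(y^n − ũ^n) + h(y^n) + 2f(u^n) − f(u^{n−1}) = 0, with δt < 2/(3L). Then E^n(y^n) ≤ E^n(u^n) − (4/(3δt) − L/2)‖y^n − u^n‖² − (5/6)‖y^n − u^n‖_M² + (1/6)‖u^n − u^{n−1}‖_M². -/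
open scoped RealInnerProductSpace

lemma dir_deriv {X : Type*} [NormedAddCommGroup X] [InnerProductSpace ℝ X] [CompleteSpace X]
    {G : X → ℝ} {g : X} (x v : X) (t : ℝ)
    (hG : HasGradientAt G g (x + t • v)) :
    HasDerivAt (fun s : ℝ => G (x + s • v)) ⟪g, v⟫ t := by
  have hc : HasDerivAt (fun s : ℝ => x + s • v) v t := by
    simpa using ((hasDerivAt_id t).smul_const v).const_add x
  have := (hasGradientAt_iff_hasFDerivAt.mp hG).comp_hasDerivAt t hc
  exact this

lemma convex_grad_ineq {X : Type*} [NormedAddCommGroup X] [InnerProductSpace ℝ X]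
    [CompleteSpace X]
    {H : X → ℝ} {h : X → X} (hH : ∀ x : X, HasGradientAt H (h x) x)
    (hc : ConvexOn ℝ Set.univ H) (x y : X) :
    H x + ⟪h x, y - x⟫ ≤ H y := by
  set g : ℝ → ℝ := fun t => H (x + t • (y - x)) with hg
  have hgc : ConvexOn ℝ Set.univ g := by
    have h2 := hc.comp_affineMap (AffineMap.lineMap x y)
    have he : g = H ∘ (AffineMap.lineMap x y) := by
      funext t
      simp [hg, AffineMap.lineMap_apply, add_comm]
    rw [he]
    simpa using h2
  have hd : HasDerivAt g ⟪h x, y - x⟫ 0 := by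
    apply dir_deriv x (y - x) 0
    simpa using hH x
  have hs := hgc.le_slope_of_hasDerivAt (Set.mem_univ 0) (Set.mem_univ 1) one_pos hd
  have h0 : g 0 = H x := by simp [hg]
  have h1 : g 1 = H y := by simp [hg]
  rw [slope_def_field, h0, h1] at hs
  simp at hs
  linarith

lemma descent_lemma {X : Type*} [NormedAddCommGroup X] [InnerProductSpace ℝ X]
    [CompleteSpace X]
    {F : X → ℝ} {f : X → X} (hF : ∀ x : X, HasGradientAt F (f x) x)
    {L : ℝ} (hL : 0 ≤ L) (hLip : ∀ x y : X, ‖f x - f y‖ ≤ L * ‖x - y‖) (x y : X) :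
    F y ≤ F x + ⟪f x, y - x⟫ + L / 2 * ‖y - x‖ ^ 2 := by
  set d := y - x with hd
  set ψ : ℝ → ℝ := fun t => L * ‖d‖ ^ 2 / 2 * t ^ 2 + t * ⟪f x, d⟫ - F (x + t • d) with hψ
  have hder : ∀ t : ℝ, HasDerivAt ψ
      (L * ‖d‖ ^ 2 * t + ⟪f x, d⟫ - ⟪f (x + t • d), d⟫) t := by
    intro t
    have h1 : HasDerivAt (fun s : ℝ => L * ‖d‖ ^ 2 / 2 * s ^ 2 + s * ⟪f x, d⟫)
        (L * ‖d‖ ^ 2 * t + ⟪f x, d⟫) t := by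
      have := ((hasDerivAt_pow 2 t).const_mul (L * ‖d‖ ^ 2 / 2)).add
        ((hasDerivAt_id t).mul_const ⟪f x, d⟫)
      refine this.congr_deriv ?_
      simp; ring
    exact h1.sub (dir_deriv x d t (hF (x + t • d)))
  have hmono : MonotoneOn ψ (Set.Icc (0:ℝ) 1) := by
    apply monotoneOn_of_hasDerivWithinAt_nonneg (convex_Icc 0 1)
      (fun t _ => ((hder t).continuousAt).continuousWithinAt)
      (fun t _ => ((hder t).hasDerivWithinAt))
    intro t ht
    rw [interior_Icc] at ht
    have ht0 : 0 < t := ht.1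
    have h2 : ⟪f (x + t • d) - f x, d⟫ ≤ ‖f (x + t • d) - f x‖ * ‖d‖ :=
      real_inner_le_norm _ _
    have h3 : ‖f (x + t • d) - f x‖ ≤ L * ‖t • d‖ := by
      simpa using hLip (x + t • d) x
    have h4 : ‖t • d‖ = t * ‖d‖ := by
      rw [norm_smul, Real.norm_eq_abs, abs_of_pos ht0]
    rw [inner_sub_left] at h2
    rw [h4] at h3
    nlinarith [mul_le_mul_of_nonneg_right h3 (norm_nonneg d), norm_nonneg d]
  have h01 := hmono (Set.mem_Icc.mpr ⟨le_refl 0, zero_le_one⟩)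
    (Set.mem_Icc.mpr ⟨zero_le_one, le_refl 1⟩) zero_le_one
  have h0 : ψ 0 = - F x := by simp [hψ]
  have h1 : ψ 1 = L * ‖d‖ ^ 2 / 2 + ⟪f x, d⟫ - F y := by
    simp [hψ, hd]
  rw [h0, h1] at h01
  linarith

/-- Energy decrease for the extrapolated starting point `ũⁿ = (4/3)uⁿ - (1/3)uⁿ⁻¹`. -/
theorem energy_decrease_util
    {X : Type*} [NormedAddCommGroup X] [InnerProductSpace ℝ X] [FiniteDimensional ℝ X]
    (H : X → ℝ) (h : X → X) (hH : ∀ x : X, HasGradientAt H (h x) x)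
    (hHconv : ConvexOn ℝ Set.univ H)
    (F : X → ℝ) (f : X → X) (hF : ∀ x : X, HasGradientAt F (f x) x)
    (L : ℝ) (hL : 0 < L) (hLip : ∀ x y : X, ‖f x - f y‖ ≤ L * ‖x - y‖)
    (δt : ℝ) (hδt : 0 < δt) (hδt2 : δt < 2 / (3 * L))
    (M : X →L[ℝ] X) (hMsym : ∀ x y : X, ⟪M x, y⟫ = ⟪x, M y⟫)
    (hMpsd : ∀ x : X, 0 ≤ ⟪M x, x⟫)
    (un unm1 : X)
    (Hn Fn En : X → ℝ)
    (hHn : ∀ u : X, Hn u = H u + (1 / δt) * ‖u - un‖ ^ 2)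
    (hFn : ∀ u : X, Fn u = (1 / (3 * δt)) * ‖u - unm1‖ ^ 2 - F u
      - ⟪f un - f unm1, u - unm1⟫)
    (hEn : ∀ u : X, En u = Hn u - Fn u)
    (util : X) (hutil : util = (4 / 3 : ℝ) • un - (1 / 3 : ℝ) • unm1)
    (yn : X)
    (hopt : (2 / (3 * δt)) • ((3 : ℝ) • yn - (4 : ℝ) • un + unm1) + M (yn - util)
      + h yn + (2 : ℝ) • f un - f unm1 = 0) :
    En yn ≤ En un - (4 / (3 * δt) - L / 2) * ‖yn - un‖ ^ 2
      - (5 / 6) * ⟪M (yn - un), yn - un⟫ + (1 / 6) * ⟪M (un - unm1), un - unm1⟫ := by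
  set d := yn - un with hd
  set e := un - unm1 with he
  -- basic vector identities
  have hv1 : (3 : ℝ) • yn - (4 : ℝ) • un + unm1 = (3 : ℝ) • d - e := by
    rw [hd, he]; module
  have hv2 : yn - util = d - (1 / 3 : ℝ) • e := by
    rw [hutil, hd, he]; module
  have hv3 : yn - unm1 = d + e := by rw [hd, he]; abel
  -- convexity of H
  have hA : H yn + ⟪h yn, un - yn⟫ ≤ H un := convex_grad_ineq hH hHconv yn un
  have hA' : ⟪h yn, un - yn⟫ = - ⟪h yn, d⟫ := by
    rw [hd, ← inner_neg_right]; congr 1; abel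
  rw [hA'] at hA
  -- descent lemma for F
  have hB : F yn ≤ F un + ⟪f un, d⟫ + L / 2 * ‖d‖ ^ 2 := by
    have := descent_lemma hF hL.le hLip un yn
    rwa [← hd] at this
  -- inner product of the optimality condition with d
  have hC : (2 / (3 * δt)) * (3 * ‖d‖ ^ 2 - ⟪e, d⟫) + (⟪M d, d⟫ - (1/3) * ⟪M e, d⟫)
      + ⟪h yn, d⟫ + 2 * ⟪f un, d⟫ - ⟪f unm1, d⟫ = 0 := by
    have h0 : ⟪(2 / (3 * δt)) • ((3 : ℝ) • yn - (4 : ℝ) • un + unm1) + M (yn - util)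
        + h yn + (2 : ℝ) • f un - f unm1, d⟫ = 0 := by
      rw [hopt]; simp
    rw [hv1, hv2] at h0
    rw [map_sub, map_smul] at h0
    simp only [inner_add_left, inner_sub_left, real_inner_smul_left,
      real_inner_self_eq_norm_sq] at h0 ⊢
    linarith [h0]
  -- positive semidefiniteness consequence
  have hPSD : 2 * ⟪M e, d⟫ ≤ ⟪M d, d⟫ + ⟪M e, e⟫ := by
    have h0 := hMpsd (d - e)
    rw [map_sub] at h0
    simp only [inner_sub_left, inner_sub_right] at h0
    have hs1 : ⟪M d, e⟫ = ⟪M e, d⟫ := by rw [hMsym d e, real_inner_comm]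
    linarith [h0, hs1 ▸ h0]
  -- norm expansion
  have hN : ‖yn - unm1‖ ^ 2 = ‖d‖ ^ 2 + 2 * ⟪d, e⟫ + ‖e‖ ^ 2 := by
    rw [hv3, ← real_inner_self_eq_norm_sq, ← real_inner_self_eq_norm_sq,
      ← real_inner_self_eq_norm_sq]
    simp only [inner_add_left, inner_add_right]
    rw [real_inner_comm e d]; ring
  have hde : ⟪e, d⟫ = ⟪d, e⟫ := by rw [real_inner_comm]
  -- expand the energies
  rw [hEn, hEn, hHn, hHn, hFn, hFn, hN]
  rw [← hd, ← he]
  have hz : un - un = (0 : X) := sub_self un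
  rw [hz]
  simp only [norm_zero, inner_sub_left, hv3, inner_add_right]
  have hinv : 1 / (3 * δt) = (1/3) * (1/δt) := by field_simp
  have hinv2 : 2 / (3 * δt) = (2/3) * (1/δt) := by field_simp
  have hinv4 : 4 / (3 * δt) = (4/3) * (1/δt) := by field_simp
  rw [hinv, hinv4]
  rw [hinv2, hde] at hC
  linarith [hA, hB, hC, hPSD]
end
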